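/- Let 𝒢 be an ultragraph and R a unital commutative ring. If the edge set 𝒢¹ is finite, G⁰ ∈ 𝒢⁰, and for each edge e₁ ∈ 𝒢¹ there exists an edge e₂ ∈ 𝒢¹ with s(e₁) ∈ r(e₂), then L_R(𝒢) is epsilon-strongly ℤ-graded with respect to the canonical grading {L_R(𝒢)_m}_{m∈ℤ}. -/

import Mathlib

/-- An ultragraph: a source map `src : E → V` and a range map assigning to each
edge a nonempty set of vertices. -/
structure Ultragraph (V : Type) (E : Type) : Type where
  src : E → V
  rng : E → Set V
  rng_nonempty : ∀ e, (rng e).Nonempty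

namespace Ultragraph

variable {V E : Type}

/-- A finite path: a (possibly empty) list of edges with compatible transitions. -/
def IsPath (G : Ultragraph V E) (es : List E) : Prop :=
  es.Chain' fun e f => G.src f ∈ G.rng e

/-- An infinite path. -/
def IsInfinitePath (G : Ultragraph V E) (p : ℕ → E) : Prop :=
  ∀ i : ℕ, G.src (p (i + 1)) ∈ G.rng (p i)

/-- Condition (Y). -/
def ConditionY (G : Ultragraph V E) : Prop :=
  ∀ p : ℕ → E, G.IsInfinitePath p →
    ∃ (k : ℕ) (α : List E) (hα : α ≠ []),
      α.length = k + 1 ∧ G.IsPath α ∧ G.src (p k) ∈ G.rng (α.getLast hα)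

/-- The collection 𝒢⁰ of generalized vertices: the smallest collection of subsets of `V`
containing the singletons and the ranges of edges, closed under finite unions and finite
intersections (the empty set is included for convenience; `p_∅ = 0`). -/
inductive InG0 (G : Ultragraph V E) : Set V → Prop
  | vertex (v : V) : InG0 G {v}
  | range (e : E) : InG0 G (G.rng e)
  | union {A B : Set V} : InG0 G A → InG0 G B → InG0 G (A ∪ B)
  | inter {A B : Set V} : InG0 G A → InG0 G B → InG0 G (A ∩ B)

/-- Generators of the Leavitt path algebra. -/
inductive LPAGen (G : Ultragraph V E) : Type
  | edge : E → LPAGen G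
  | star : E → LPAGen G
  | proj : (A : Set V) → G.InG0 A → LPAGen G

/-- The directed graph `E_𝒢` associated to an ultragraph, viewed again as an ultragraph
whose edge ranges are singletons. -/
def toGraph (G : Ultragraph V E) : Ultragraph V {q : E × V // q.2 ∈ G.rng q.1} where
  src q := G.src q.1.1
  rng q := {q.1.2}
  rng_nonempty q := ⟨q.1.2, rfl⟩

variable (R : Type) [CommRing R] (G : Ultragraph V E)

/-- The free `R`-algebra on the generators. -/
abbrev FA := FreeAlgebra R (LPAGen G)

/-- The generator `g` inside the free algebra. -/
def X (g : LPAGen G) : FA R G := FreeAlgebra.ι R g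

/-- The defining relations of the Leavitt path algebra of an ultragraph. -/
inductive LeavittRel : FA R G → FA R G → Prop
  | proj_empty (h : G.InG0 ∅) : LeavittRel (X R G (.proj ∅ h)) 0
  | proj_mul (A B : Set V) (hA : G.InG0 A) (hB : G.InG0 B) :
      LeavittRel (X R G (.proj A hA) * X R G (.proj B hB))
        (X R G (.proj (A ∩ B) (hA.inter hB)))
  | proj_union (A B : Set V) (hA : G.InG0 A) (hB : G.InG0 B) :
      LeavittRel (X R G (.proj (A ∪ B) (hA.union hB)))
        (X R G (.proj A hA) + X R G (.proj B hB) - X R G (.proj (A ∩ B) (hA.inter hB)))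
  | src_mul (e : E) :
      LeavittRel (X R G (.proj {G.src e} (InG0.vertex (G.src e))) * X R G (.edge e))
        (X R G (.edge e))
  | mul_rng (e : E) :
      LeavittRel (X R G (.edge e) * X R G (.proj (G.rng e) (InG0.range e)))
        (X R G (.edge e))
  | rng_mul_star (e : E) :
      LeavittRel (X R G (.proj (G.rng e) (InG0.range e)) * X R G (.star e))
        (X R G (.star e))
  | star_mul_src (e : E) :
      LeavittRel (X R G (.star e) * X R G (.proj {G.src e} (InG0.vertex (G.src e))))
        (X R G (.star e))
  | star_mul_same (e : E) :
      LeavittRel (X R G (.star e) * X R G (.edge e))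
        (X R G (.proj (G.rng e) (InG0.range e)))
  | star_mul_ne (e f : E) (h : e ≠ f) :
      LeavittRel (X R G (.star e) * X R G (.edge f)) 0
  | ck (v : V) (hfin : {e : E | G.src e = v}.Finite) (hne : {e : E | G.src e = v}.Nonempty) :
      LeavittRel (X R G (.proj {v} (InG0.vertex v)))
        (∑ e ∈ hfin.toFinset, X R G (.edge e) * X R G (.star e))

/-- The (unital) quotient of the free algebra by the Leavitt relations; the Leavitt
path algebra `L_R(𝒢)` sits inside it as the non-unital subalgebra generated by the
generators. -/
abbrev LPABig := RingQuot (LeavittRel R G)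

/-- The image of a generator in the quotient. -/
def gen (g : LPAGen G) : LPABig R G := RingQuot.mkAlgHom R (LeavittRel R G) (X R G g)

/-- `s_e`. -/
def sgen (e : E) : LPABig R G := gen R G (.edge e)

/-- `s_e^*`. -/
def tgen (e : E) : LPABig R G := gen R G (.star e)

/-- `p_A`. -/
def pgen (A : Set V) (hA : G.InG0 A) : LPABig R G := gen R G (.proj A hA)

/-- `s_α` for a finite path `α` (the empty product is `1` in the ambient algebra). -/
def sPath (es : List E) : LPABig R G := (es.map (sgen R G)).prod

/-- `s_β^*` for a finite path `β`. -/
def tPath (es : List E) : LPABig R G := (es.reverse.map (tgen R G)).prod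

/-- The monomial `s_α p_A s_β^*`. -/
def mono (α : List E) (A : Set V) (hA : G.InG0 A) (β : List E) : LPABig R G :=
  sPath R G α * pgen R G A hA * tPath R G β

/-- The `m`-th component of the canonical `ℤ`-grading: all finite `R`-linear combinations
of monomials `s_α p_A s_β^*` with `|α| - |β| = m`. -/
def zComp (m : ℤ) : AddSubgroup (LPABig R G) :=
  AddSubgroup.closure {x | ∃ (l : R) (α β : List E) (A : Set V) (hA : G.InG0 A),
    G.IsPath α ∧ G.IsPath β ∧ (α.length : ℤ) - (β.length : ℤ) = m ∧
    x = l • mono R G α A hA β}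

/-- The element of the free group on the edges determined by a finite path. -/
def pathWord (es : List E) : FreeGroup E := (es.map FreeGroup.of).prod

/-- The `g`-th component of the free-group grading: all finite `R`-linear combinations
of monomials `s_α p_A s_β^*` with `α β⁻¹ = g` in the free group on the edges. -/
def fComp (g : FreeGroup E) : AddSubgroup (LPABig R G) :=
  AddSubgroup.closure {x | ∃ (l : R) (α β : List E) (A : Set V) (hA : G.InG0 A),
    G.IsPath α ∧ G.IsPath β ∧ pathWord α * (pathWord β)⁻¹ = g ∧
    x = l • mono R G α A hA β}

/-- The set of generators inside the quotient. -/
def genSet : Set (LPABig R G) := Set.range (gen R G)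

/-- The Leavitt path algebra `L_R(𝒢)`: the non-unital subalgebra of the quotient
generated by the images of the generators. -/
def LPA : NonUnitalSubalgebra R (LPABig R G) := NonUnitalAlgebra.adjoin R (genSet R G)

/-- `s_e` as an element of `L_R(𝒢)`. -/
def sEl (e : E) : LPA R G :=
  ⟨sgen R G e, NonUnitalAlgebra.subset_adjoin R ⟨LPAGen.edge e, rfl⟩⟩

/-- `s_e^*` as an element of `L_R(𝒢)`. -/
def tEl (e : E) : LPA R G :=
  ⟨tgen R G e, NonUnitalAlgebra.subset_adjoin R ⟨LPAGen.star e, rfl⟩⟩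

/-- `p_A` as an element of `L_R(𝒢)`. -/
def pEl (A : Set V) (hA : G.InG0 A) : LPA R G :=
  ⟨pgen R G A hA, NonUnitalAlgebra.subset_adjoin R ⟨LPAGen.proj A hA, rfl⟩⟩

end Ultragraph

/-- The additive span of the set of products `{a b : a ∈ S, b ∈ T}`. -/
def mulSpan {A : Type} [AddGroup A] [Mul A] (S T : AddSubgroup A) : AddSubgroup A :=
  AddSubgroup.closure {x | ∃ a ∈ S, ∃ b ∈ T, x = a * b}

section EpsilonStrong

namespace Ultragraph

variable {V E : Type} {R : Type} [CommRing R] {G : Ultragraph V E}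

lemma rel_eq {x y : FA R G} (h : LeavittRel R G x y) :
    RingQuot.mkAlgHom R (LeavittRel R G) x = RingQuot.mkAlgHom R (LeavittRel R G) y :=
  RingQuot.mkAlgHom_rel R h

lemma gen_mul (a b : LPAGen G) :
    gen R G a * gen R G b = RingQuot.mkAlgHom R (LeavittRel R G) (X R G a * X R G b) :=
  (map_mul _ _ _).symm

lemma pgen_congr {A B : Set V} (h : A = B) (hA : G.InG0 A) (hB : G.InG0 B) :
    pgen R G A hA = pgen R G B hB := by subst h; rfl

lemma pgen_inter (A B : Set V) (hA : G.InG0 A) (hB : G.InG0 B) :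
    pgen R G A hA * pgen R G B hB = pgen R G (A ∩ B) (hA.inter hB) := by
  rw [pgen, pgen, pgen, gen_mul]
  exact rel_eq (LeavittRel.proj_mul A B hA hB)

lemma pgen_empty (h : G.InG0 ∅) : pgen R G ∅ h = (0 : LPABig R G) := by
  rw [pgen, gen]
  have := rel_eq (R := R) (G := G) (LeavittRel.proj_empty h)
  simpa using this

lemma pgen_union (A B : Set V) (hA : G.InG0 A) (hB : G.InG0 B) :
    pgen R G (A ∪ B) (hA.union hB)
      = pgen R G A hA + pgen R G B hB - pgen R G (A ∩ B) (hA.inter hB) := by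
  have := rel_eq (R := R) (G := G) (LeavittRel.proj_union A B hA hB)
  simpa [pgen, gen, map_sub, map_add] using this

lemma psrc_mul_sgen (e : E) :
    pgen R G {G.src e} (InG0.vertex (G.src e)) * sgen R G e = sgen R G e := by
  rw [pgen, sgen, gen_mul]; exact rel_eq (LeavittRel.src_mul e)

lemma sgen_mul_prng (e : E) :
    sgen R G e * pgen R G (G.rng e) (InG0.range e) = sgen R G e := by
  rw [pgen, sgen, gen_mul]; exact rel_eq (LeavittRel.mul_rng e)

lemma prng_mul_tgen (e : E) :
    pgen R G (G.rng e) (InG0.range e) * tgen R G e = tgen R G e := by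
  rw [pgen, tgen, gen_mul]; exact rel_eq (LeavittRel.rng_mul_star e)

lemma tgen_mul_psrc (e : E) :
    tgen R G e * pgen R G {G.src e} (InG0.vertex (G.src e)) = tgen R G e := by
  rw [pgen, tgen, gen_mul]; exact rel_eq (LeavittRel.star_mul_src e)

lemma tgen_mul_sgen_same (e : E) :
    tgen R G e * sgen R G e = pgen R G (G.rng e) (InG0.range e) := by
  rw [pgen, tgen, sgen, gen_mul]; exact rel_eq (LeavittRel.star_mul_same e)

lemma tgen_mul_sgen_ne {e f : E} (h : e ≠ f) :
    tgen R G e * sgen R G f = (0 : LPABig R G) := by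
  rw [tgen, sgen, gen_mul]
  have := rel_eq (R := R) (G := G) (LeavittRel.star_mul_ne e f h)
  simpa using this

/-- `p_B s_e = s_e` when `s(e) ∈ B`. -/
lemma pgen_mul_sgen {B : Set V} (hB : G.InG0 B) {e : E} (h : G.src e ∈ B) :
    pgen R G B hB * sgen R G e = sgen R G e := by
  have h1 : B ∩ {G.src e} = {G.src e} :=
    Set.inter_eq_self_of_subset_right (Set.singleton_subset_iff.2 h)
  calc pgen R G B hB * sgen R G e
      = pgen R G B hB * (pgen R G {G.src e} (InG0.vertex (G.src e)) * sgen R G e) := by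
        rw [psrc_mul_sgen]
    _ = pgen R G (B ∩ {G.src e}) (hB.inter (InG0.vertex _)) * sgen R G e := by
        rw [← mul_assoc, pgen_inter]
    _ = pgen R G {G.src e} (InG0.vertex (G.src e)) * sgen R G e := by
        rw [pgen_congr h1]
    _ = sgen R G e := psrc_mul_sgen e

/-- `s_e p_B = s_e` when `r(e) ⊆ B`. -/
lemma sgen_mul_pgen {B : Set V} (hB : G.InG0 B) {e : E} (h : G.rng e ⊆ B) :
    sgen R G e * pgen R G B hB = sgen R G e := by
  have h1 : G.rng e ∩ B = G.rng e := Set.inter_eq_self_of_subset_left h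
  calc sgen R G e * pgen R G B hB
      = (sgen R G e * pgen R G (G.rng e) (InG0.range e)) * pgen R G B hB := by
        rw [sgen_mul_prng]
    _ = sgen R G e * pgen R G (G.rng e ∩ B) ((InG0.range e).inter hB) := by
        rw [mul_assoc, pgen_inter]
    _ = sgen R G e * pgen R G (G.rng e) (InG0.range e) := by rw [pgen_congr h1]
    _ = sgen R G e := sgen_mul_prng e

/-- `p_B s_e^* = s_e^*` when `r(e) ⊆ B`. -/
lemma pgen_mul_tgen {B : Set V} (hB : G.InG0 B) {e : E} (h : G.rng e ⊆ B) :
    pgen R G B hB * tgen R G e = tgen R G e := by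
  have h1 : B ∩ G.rng e = G.rng e := Set.inter_eq_self_of_subset_right h
  calc pgen R G B hB * tgen R G e
      = pgen R G B hB * (pgen R G (G.rng e) (InG0.range e) * tgen R G e) := by
        rw [prng_mul_tgen]
    _ = pgen R G (B ∩ G.rng e) (hB.inter (InG0.range e)) * tgen R G e := by
        rw [← mul_assoc, pgen_inter]
    _ = pgen R G (G.rng e) (InG0.range e) * tgen R G e := by rw [pgen_congr h1]
    _ = tgen R G e := prng_mul_tgen e

/-- `s_e^* p_B = s_e^*` when `s(e) ∈ B`. -/
lemma tgen_mul_pgen {B : Set V} (hB : G.InG0 B) {e : E} (h : G.src e ∈ B) :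
    tgen R G e * pgen R G B hB = tgen R G e := by
  have h1 : ({G.src e} : Set V) ∩ B = {G.src e} :=
    Set.inter_eq_self_of_subset_left (Set.singleton_subset_iff.2 h)
  calc tgen R G e * pgen R G B hB
      = (tgen R G e * pgen R G {G.src e} (InG0.vertex _)) * pgen R G B hB := by
        rw [tgen_mul_psrc]
    _ = tgen R G e * pgen R G ({G.src e} ∩ B) ((InG0.vertex _).inter hB) := by
        rw [mul_assoc, pgen_inter]
    _ = tgen R G e * pgen R G {G.src e} (InG0.vertex _) := by rw [pgen_congr h1]
    _ = tgen R G e := tgen_mul_psrc e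

@[simp] lemma sPath_nil : sPath R G ([] : List E) = 1 := rfl

@[simp] lemma tPath_nil : tPath R G ([] : List E) = 1 := rfl

lemma sPath_cons (e : E) (l : List E) :
    sPath R G (e :: l) = sgen R G e * sPath R G l := by
  simp [sPath]

lemma sPath_append (a b : List E) :
    sPath R G (a ++ b) = sPath R G a * sPath R G b := by
  simp [sPath]

lemma tPath_append (a b : List E) :
    tPath R G (a ++ b) = tPath R G b * tPath R G a := by
  simp [tPath]

@[simp] lemma sPath_singleton (e : E) : sPath R G [e] = sgen R G e := by
  simp [sPath]

@[simp] lemma tPath_singleton (e : E) : tPath R G [e] = tgen R G e := by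
  simp [tPath]

lemma tPath_cons (e : E) (l : List E) :
    tPath R G (e :: l) = tPath R G l * tgen R G e := by
  simpa [tPath_append] using tPath_append [e] l

lemma tPath_concat (l : List E) (e : E) :
    tPath R G (l ++ [e]) = tgen R G e * tPath R G l := by
  simp [tPath_append]

/-- `p_{r(e)}` for the last edge `e` of a list (and `1` for the empty list). -/
def pLast (R : Type) [CommRing R] (G : Ultragraph V E) (l : List E) : LPABig R G :=
  match l.getLast? with
  | none => 1
  | some e => pgen R G (G.rng e) (InG0.range e)

@[simp] lemma pLast_nil : pLast R G ([] : List E) = 1 := rfl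

@[simp] lemma pLast_singleton (e : E) :
    pLast R G [e] = pgen R G (G.rng e) (InG0.range e) := rfl

lemma pLast_cons_cons (e f : E) (l : List E) :
    pLast R G (e :: f :: l) = pLast R G (f :: l) := by
  simp [pLast]

lemma pLast_concat (l : List E) (e : E) :
    pLast R G (l ++ [e]) = pgen R G (G.rng e) (InG0.range e) := by
  simp [pLast]

lemma pLast_of_getLast? {l : List E} {e : E} (h : l.getLast? = some e) :
    pLast R G l = pgen R G (G.rng e) (InG0.range e) := by
  simp [pLast, h]

/-- `s_δ^* s_δ = p_{r(δ_last)}` for a path `δ`. -/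
lemma tPath_mul_sPath_self {δ : List E} (hδ : G.IsPath δ) :
    tPath R G δ * sPath R G δ = pLast R G δ := by
  induction δ with
  | nil => simp
  | cons f δ' ih =>
    rw [tPath_cons, sPath_cons, mul_assoc, ← mul_assoc (tgen R G f),
      tgen_mul_sgen_same]
    cases δ' with
    | nil => simp
    | cons g t =>
      have h1 : G.src g ∈ G.rng f := (List.isChain_cons_cons.1 hδ).1
      have h2 : G.IsPath (g :: t) := (List.isChain_cons_cons.1 hδ).2
      rw [sPath_cons, ← mul_assoc (pgen R G (G.rng f) (InG0.range f)),
        pgen_mul_sgen _ h1, ← sPath_cons, ih h2, pLast_cons_cons]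

/-- `s_α^* s_δ = 0` for distinct `α, δ` of the same length (`δ` a path). -/
lemma tPath_mul_sPath_ne {α δ : List E} (hlen : α.length = δ.length)
    (hδ : G.IsPath δ) (hne : α ≠ δ) :
    tPath R G α * sPath R G δ = 0 := by
  induction α generalizing δ with
  | nil =>
    cases δ with
    | nil => exact absurd rfl hne
    | cons f t => simp at hlen
  | cons e α' ih =>
    cases δ with
    | nil => simp at hlen
    | cons f δ' =>
      rw [tPath_cons, sPath_cons, mul_assoc, ← mul_assoc (tgen R G e)]
      by_cases hef : e = f
      · subst hef
        rw [tgen_mul_sgen_same]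
        have hne' : α' ≠ δ' := by
          intro h; exact hne (by rw [h])
        have hlen' : α'.length = δ'.length := by simpa using hlen
        cases δ' with
        | nil =>
          exact absurd (List.length_eq_zero_iff.1 hlen') hne'
        | cons g t =>
          have h1 : G.src g ∈ G.rng e := (List.isChain_cons_cons.1 hδ).1
          have h2 : G.IsPath (g :: t) := (List.isChain_cons_cons.1 hδ).2
          rw [sPath_cons, ← mul_assoc (pgen R G (G.rng e) (InG0.range e)),
            pgen_mul_sgen _ h1, ← sPath_cons, ih hlen' h2 hne']
      · rw [tgen_mul_sgen_ne hef, zero_mul, mul_zero]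

lemma sPath_mul_pLast {δ : List E} (hδ : δ ≠ []) :
    sPath R G δ * pLast R G δ = sPath R G δ := by
  induction δ with
  | nil => exact absurd rfl hδ
  | cons f δ' ih =>
    cases δ' with
    | nil => simpa using sgen_mul_prng (R := R) (G := G) f
    | cons g t =>
      rw [pLast_cons_cons, sPath_cons, mul_assoc, ih (by simp)]

lemma pLast_mul_tPath {δ : List E} (hδ : δ ≠ []) :
    pLast R G δ * tPath R G δ = tPath R G δ := by
  induction δ with
  | nil => exact absurd rfl hδ
  | cons f δ' ih =>
    cases δ' with
    | nil => simpa using prng_mul_tgen (R := R) (G := G) f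
    | cons g t =>
      rw [pLast_cons_cons, tPath_cons, ← mul_assoc, ih (by simp)]

/-- There are arbitrarily long paths ending at a given edge. -/
lemma exists_path_ending (hsrc : ∀ e₁ : E, ∃ e₂ : E, G.src e₁ ∈ G.rng e₂)
    (e : E) (n : ℕ) :
    ∃ δ : List E, δ.length = n + 1 ∧ G.IsPath δ ∧ δ.getLast? = some e := by
  induction n with
  | zero => exact ⟨[e], rfl, List.isChain_singleton e, rfl⟩
  | succ n ih =>
    obtain ⟨δ, hl, hp, hlast⟩ := ih
    have hδ : δ ≠ [] := by intro h; subst h; simp at hl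
    obtain ⟨g, hg⟩ := hsrc (δ.head hδ)
    refine ⟨g :: δ, by simp [hl], ?_, ?_⟩
    · simp only [IsPath, List.Chain', List.isChain_cons]
      refine ⟨?_, hp⟩
      intro b hb
      rw [List.head?_eq_head hδ] at hb
      obtain rfl : b = δ.head hδ := by simpa using hb.symm
      exact hg
    · rw [List.getLast?_cons, hlast]
      cases δ <;> simp_all [List.getLast?_cons]

@[simp] lemma mono_nil_nil (A : Set V) (hA : G.InG0 A) :
    mono R G [] A hA [] = pgen R G A hA := by
  simp [mono]

lemma mono_mem_zComp {m : ℤ} {α β : List E} {A : Set V} {hA : G.InG0 A}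
    (hα : G.IsPath α) (hβ : G.IsPath β)
    (h : (α.length : ℤ) - (β.length : ℤ) = m) :
    mono R G α A hA β ∈ zComp R G m :=
  AddSubgroup.subset_closure ⟨1, α, β, A, hA, hα, hβ, h, (one_smul R _).symm⟩

lemma smul_mono_mem_zComp {m : ℤ} (l : R) {α β : List E} {A : Set V} {hA : G.InG0 A}
    (hα : G.IsPath α) (hβ : G.IsPath β)
    (h : (α.length : ℤ) - (β.length : ℤ) = m) :
    l • mono R G α A hA β ∈ zComp R G m :=
  AddSubgroup.subset_closure ⟨l, α, β, A, hA, hα, hβ, h, rfl⟩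

/-- Master lemma: a left unit on all monomials of degree `m` is a left unit
on `zComp m`. -/
lemma left_unit_of_mono {ε : LPABig R G} {m : ℤ}
    (H : ∀ (α β : List E) (A : Set V) (hA : G.InG0 A), G.IsPath α → G.IsPath β →
      (α.length : ℤ) - (β.length : ℤ) = m →
      ε * mono R G α A hA β = mono R G α A hA β) :
    ∀ t ∈ zComp R G m, ε * t = t := by
  intro t ht
  induction ht using AddSubgroup.closure_induction with
  | mem x hx =>
    obtain ⟨l, α, β, A, hA, hα, hβ, hm, rfl⟩ := hx
    rw [mul_smul_comm, H α β A hA hα hβ hm]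
  | zero => rw [mul_zero]
  | add x y hx hy ihx ihy => rw [mul_add, ihx, ihy]
  | neg x hx ihx =>
    have h1 : ε * -x = -(ε * x) := mul_neg ε x
    rw [h1, ihx]

/-- Master lemma: a right unit on all monomials of degree `m` is a right unit
on `zComp m`. -/
lemma right_unit_of_mono {ε : LPABig R G} {m : ℤ}
    (H : ∀ (α β : List E) (A : Set V) (hA : G.InG0 A), G.IsPath α → G.IsPath β →
      (α.length : ℤ) - (β.length : ℤ) = m →
      mono R G α A hA β * ε = mono R G α A hA β) :
    ∀ t ∈ zComp R G m, t * ε = t := by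
  intro t ht
  induction ht using AddSubgroup.closure_induction with
  | mem x hx =>
    obtain ⟨l, α, β, A, hA, hα, hβ, hm, rfl⟩ := hx
    rw [smul_mul_assoc, H α β A hA hα hβ hm]
  | zero => rw [zero_mul]
  | add x y hx hy ihx ihy => rw [add_mul, ihx, ihy]
  | neg x hx ihx =>
    have h1 : -x * ε = -(x * ε) := neg_mul x ε
    rw [h1, ihx]

/-- `p_B` is a left unit on a monomial whose sources/ranges all lie in `B`. -/
lemma pgen_left_unit_mono {B : Set V} (hB : G.InG0 B)
    (hsB : ∀ e : E, G.src e ∈ B) (hrB : ∀ e : E, G.rng e ⊆ B)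
    (σ τ : List E) (A : Set V) (hA : G.InG0 A)
    (hcase : σ = [] → (τ ≠ [] ∨ B ∩ A = A)) :
    pgen R G B hB * mono R G σ A hA τ = mono R G σ A hA τ := by
  cases σ with
  | cons e σ' =>
    simp only [mono, sPath_cons, mul_assoc]
    rw [← mul_assoc, pgen_mul_sgen _ (hsB e)]
  | nil =>
    rcases hcase rfl with hτ | hBA
    · obtain hnil | ⟨L, f, rfl⟩ := τ.eq_nil_or_concat
      · exact absurd hnil hτ
      · have hsub : A ∩ G.rng f ⊆ B := fun x hx => hrB f hx.2
        have key : pgen R G B hB * pgen R G A hA * tgen R G f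
            = pgen R G A hA * tgen R G f := by
          rw [pgen_inter]
          conv_lhs => rw [← prng_mul_tgen f]
          conv_rhs => rw [← prng_mul_tgen f]
          rw [← mul_assoc, ← mul_assoc, pgen_inter, pgen_inter,
            pgen_congr (show B ∩ A ∩ G.rng f = A ∩ G.rng f by
              rw [Set.inter_assoc]
              exact Set.inter_eq_self_of_subset_right hsub)]
        simp only [mono, sPath_nil, one_mul, List.concat_eq_append, tPath_concat,
          ← mul_assoc]
        rw [key]
    · simp only [mono, sPath_nil, one_mul]
      rw [← mul_assoc, pgen_inter, pgen_congr hBA]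

/-- `p_B` is a right unit on a monomial whose sources/ranges all lie in `B`. -/
lemma pgen_right_unit_mono {B : Set V} (hB : G.InG0 B)
    (hsB : ∀ e : E, G.src e ∈ B) (hrB : ∀ e : E, G.rng e ⊆ B)
    (σ τ : List E) (A : Set V) (hA : G.InG0 A)
    (hcase : τ = [] → (σ ≠ [] ∨ A ∩ B = A)) :
    mono R G σ A hA τ * pgen R G B hB = mono R G σ A hA τ := by
  cases τ with
  | cons e τ' =>
    simp only [mono, tPath_cons, mul_assoc]
    rw [tgen_mul_pgen _ (hsB e)]
  | nil =>
    rcases hcase rfl with hσ | hAB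
    · obtain hnil | ⟨L, f, rfl⟩ := σ.eq_nil_or_concat
      · exact absurd hnil hσ
      · have hsub : G.rng f ∩ A ⊆ B := fun x hx => hrB f hx.1
        have key : sgen R G f * (pgen R G A hA * pgen R G B hB)
            = sgen R G f * pgen R G A hA := by
          rw [pgen_inter]
          conv_lhs => rw [← sgen_mul_prng f]
          conv_rhs => rw [← sgen_mul_prng f]
          rw [mul_assoc, mul_assoc, pgen_inter, pgen_inter,
            pgen_congr (show G.rng f ∩ (A ∩ B) = G.rng f ∩ A by
              rw [← Set.inter_assoc]
              exact Set.inter_eq_self_of_subset_left hsub)]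
        simp only [mono, tPath_nil, mul_one, List.concat_eq_append, sPath_append,
          sPath_singleton, mul_assoc]
        rw [key]
    · simp only [mono, tPath_nil, mul_one]
      rw [mul_assoc, pgen_inter, pgen_congr hAB]

lemma pgen_mul_sgen_not {B : Set V} (hB : G.InG0 B) {e : E} (h : G.src e ∉ B) :
    pgen R G B hB * sgen R G e = 0 := by
  have h1 : B ∩ {G.src e} = ∅ := by
    ext x; simp only [Set.mem_inter_iff, Set.mem_singleton_iff, Set.mem_empty_iff_false,
      iff_false, not_and]
    rintro hx rfl; exact h hx
  calc pgen R G B hB * sgen R G e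
      = pgen R G B hB * (pgen R G {G.src e} (InG0.vertex (G.src e)) * sgen R G e) := by
        rw [psrc_mul_sgen]
    _ = pgen R G (B ∩ {G.src e}) (hB.inter (InG0.vertex _)) * sgen R G e := by
        rw [← mul_assoc, pgen_inter]
    _ = pgen R G ∅ (by rw [← h1]; exact hB.inter (InG0.vertex _)) * sgen R G e := by
        rw [pgen_congr h1]
    _ = 0 := by rw [pgen_empty, zero_mul]

lemma pgen_mul_mem_zComp {B : Set V} (hB : G.InG0 B) {m : ℤ} {t : LPABig R G}
    (ht : t ∈ zComp R G m) : pgen R G B hB * t ∈ zComp R G m := by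
  induction ht using AddSubgroup.closure_induction with
  | mem x hx =>
    obtain ⟨l, σ, τ, A, hA, hσ, hτ, hm, rfl⟩ := hx
    rw [mul_smul_comm]
    cases σ with
    | nil =>
      have : pgen R G B hB * mono R G [] A hA τ
          = mono R G [] (B ∩ A) (hB.inter hA) τ := by
        simp only [mono, sPath_nil, one_mul, ← mul_assoc, pgen_inter]
      rw [this]
      exact smul_mono_mem_zComp l (by simp [IsPath, List.Chain']) hτ (by simpa using hm)
    | cons e σ' =>
      by_cases h : G.src e ∈ B
      · have : pgen R G B hB * mono R G (e :: σ') A hA τ = mono R G (e :: σ') A hA τ := by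
          simp only [mono, sPath_cons, mul_assoc]
          rw [← mul_assoc, pgen_mul_sgen _ h]
        rw [this]
        exact smul_mono_mem_zComp l hσ hτ hm
      · have : pgen R G B hB * mono R G (e :: σ') A hA τ = 0 := by
          simp only [mono, sPath_cons, mul_assoc]
          rw [← mul_assoc, pgen_mul_sgen_not _ h, zero_mul]
        rw [this, smul_zero]
        exact zero_mem _
  | zero => rw [mul_zero]; exact zero_mem _
  | add x y hx hy ihx ihy => rw [mul_add]; exact add_mem ihx ihy
  | neg x hx ihx =>
    have h1 : pgen R G B hB * -x = -(pgen R G B hB * x) := mul_neg _ x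
    rw [h1]; exact neg_mem ihx

lemma pgen_mul_mem_mulSpan {B : Set V} (hB : G.InG0 B) {m m' : ℤ} {x : LPABig R G}
    (hx : x ∈ mulSpan (zComp R G m) (zComp R G m')) :
    pgen R G B hB * x ∈ mulSpan (zComp R G m) (zComp R G m') := by
  induction hx using AddSubgroup.closure_induction with
  | mem y hy =>
    obtain ⟨a, ha, b, hb, rfl⟩ := hy
    rw [← mul_assoc]
    exact AddSubgroup.subset_closure ⟨_, pgen_mul_mem_zComp hB ha, b, hb, rfl⟩
  | zero => rw [mul_zero]; exact zero_mem _
  | add x y hx hy ihx ihy => rw [mul_add]; exact add_mem ihx ihy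
  | neg x hx ihx =>
    have h1 : pgen R G B hB * -x = -(pgen R G B hB * x) := mul_neg _ x
    rw [h1]; exact neg_mem ihx

/-- `p_C ∈ zComp(-n) * zComp(n)` whenever `C ⊆ r(e₀)` for some edge `e₀`. -/
lemma pgen_mem_mulSpan_of_subset_rng
    (hsrc : ∀ e₁ : E, ∃ e₂ : E, G.src e₁ ∈ G.rng e₂)
    {n : ℕ} (hn : n ≠ 0) {C : Set V} (hC : G.InG0 C) {e₀ : E} (hsub : C ⊆ G.rng e₀) :
    pgen R G C hC ∈ mulSpan (zComp R G (-(n : ℤ))) (zComp R G (n : ℤ)) := by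
  obtain ⟨δ, hlen, hpath, hlast⟩ := exists_path_ending hsrc e₀ (n - 1)
  have hlen' : δ.length = n := by omega
  have key : mono R G [] C hC δ * mono R G δ (G.rng e₀) (InG0.range e₀) [] =
      pgen R G C hC := by
    simp only [mono, sPath_nil, tPath_nil, one_mul, mul_one]
    rw [mul_assoc, ← mul_assoc (tPath R G δ), tPath_mul_sPath_self hpath,
      pLast_of_getLast? hlast, ← mul_assoc, pgen_inter, pgen_inter,
      pgen_congr (show C ∩ G.rng e₀ ∩ G.rng e₀ = C by
        rw [Set.inter_assoc, Set.inter_self, Set.inter_eq_self_of_subset_left hsub])]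
  refine AddSubgroup.subset_closure ⟨_, ?_, _, ?_, key.symm⟩
  · exact mono_mem_zComp (by simp [IsPath, List.Chain']) hpath (by simp [hlen'])
  · exact mono_mem_zComp hpath (by simp [IsPath, List.Chain']) (by simp [hlen'])

/-- Iterated union of edge ranges over a list, with seed `C`. -/
def uniL (G : Ultragraph V E) : List E → Set V → Set V
  | [], C => C
  | e :: l, C => G.rng e ∪ uniL G l C

lemma uniL_inG0 {C : Set V} (hC : G.InG0 C) (l : List E) : G.InG0 (uniL G l C) := by
  induction l with
  | nil => exact hC
  | cons e l ih => exact (InG0.range e).union ih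

lemma subset_uniL (C : Set V) (l : List E) : C ⊆ uniL G l C := by
  induction l with
  | nil => exact subset_rfl
  | cons e l ih => exact ih.trans Set.subset_union_right

lemma rng_subset_uniL {e : E} {l : List E} (h : e ∈ l) (C : Set V) :
    G.rng e ⊆ uniL G l C := by
  induction l with
  | nil => simp at h
  | cons f l ih =>
    rcases List.mem_cons.1 h with rfl | h'
    · exact Set.subset_union_left
    · exact (ih h').trans Set.subset_union_right

lemma pgen_uniL_mem_mulSpan
    (hsrc : ∀ e₁ : E, ∃ e₂ : E, G.src e₁ ∈ G.rng e₂)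
    {n : ℕ} (hn : n ≠ 0) (l : List E) {C : Set V} (hC : G.InG0 C)
    {e₀ : E} (hsub : C ⊆ G.rng e₀) (h' : G.InG0 (uniL G l C)) :
    pgen R G (uniL G l C) h' ∈ mulSpan (zComp R G (-(n : ℤ))) (zComp R G (n : ℤ)) := by
  induction l with
  | nil => exact pgen_mem_mulSpan_of_subset_rng hsrc hn h' hsub
  | cons e l ih =>
    have hU : G.InG0 (uniL G l C) := uniL_inG0 hC l
    have hrw : pgen R G (uniL G (e :: l) C) h'
        = pgen R G (G.rng e) (InG0.range e) + pgen R G (uniL G l C) hU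
          - pgen R G (G.rng e ∩ uniL G l C) ((InG0.range e).inter hU) :=
      pgen_union (G.rng e) (G.uniL l C) (InG0.range e) hU
    rw [hrw]
    have h1 := pgen_mem_mulSpan_of_subset_rng (R := R) hsrc hn (InG0.range e)
      (subset_rfl : G.rng e ⊆ G.rng e)
    have h2 := ih hU
    have h3 : pgen R G (G.rng e ∩ uniL G l C) ((InG0.range e).inter hU)
        ∈ mulSpan (zComp R G (-(n : ℤ))) (zComp R G (n : ℤ)) := by
      rw [← pgen_inter _ _ _ hU]
      exact pgen_mul_mem_mulSpan (InG0.range e) h2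
    exact sub_mem (add_mem h1 h2) h3

lemma zComp_empty_eq_zero [IsEmpty E] {m : ℤ} (hm : m ≠ 0) {t : LPABig R G}
    (ht : t ∈ zComp R G m) : t = 0 := by
  induction ht using AddSubgroup.closure_induction with
  | mem x hx =>
    obtain ⟨l, α, β, A, hA, hα, hβ, hd, rfl⟩ := hx
    cases α with
    | cons e _ => exact isEmptyElim e
    | nil =>
      cases β with
      | cons e _ => exact isEmptyElim e
      | nil => simp at hd; omega
  | zero => rfl
  | add x y _ _ ihx ihy => rw [ihx, ihy, add_zero]
  | neg x _ ihx => rw [ihx, neg_zero]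

section FiniteE

variable [Finite E]

lemma pathSet_finite (G : Ultragraph V E) (n : ℕ) :
    {l : List E | l.length = n ∧ G.IsPath l}.Finite :=
  (List.finite_length_eq E n).subset fun _ h => h.1

/-- The finite set of paths of length `n`. -/
noncomputable def pathFinset (G : Ultragraph V E) (n : ℕ) : Finset (List E) :=
  (pathSet_finite G n).toFinset

lemma mem_pathFinset {G : Ultragraph V E} {n : ℕ} {l : List E} :
    l ∈ pathFinset G n ↔ l.length = n ∧ G.IsPath l := by
  simp [pathFinset]

/-- `ε_n = ∑_{|α| = n} s_α s_α^*`. -/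
noncomputable def epsPos (R : Type) [CommRing R] (G : Ultragraph V E) (n : ℕ) :
    LPABig R G :=
  ∑ α ∈ pathFinset G n, sPath R G α * tPath R G α

lemma epsPos_mul_mono {n : ℕ} (hn : n ≠ 0) {σ τ : List E} {A : Set V} {hA : G.InG0 A}
    (hσ : G.IsPath σ) (hlen : σ.length = τ.length + n) :
    epsPos R G n * mono R G σ A hA τ = mono R G σ A hA τ := by
  have hnle : n ≤ σ.length := by omega
  have hσ₁len : (σ.take n).length = n := by
    rw [List.length_take]; omega
  have hσ₁path : G.IsPath (σ.take n) := List.IsChain.take hσ n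
  have hσ₁ne : σ.take n ≠ [] := by
    intro h; rw [h] at hσ₁len; simp at hσ₁len; omega
  have hmem : σ.take n ∈ pathFinset G n := mem_pathFinset.2 ⟨hσ₁len, hσ₁path⟩
  have hsplit : sPath R G σ = sPath R G (σ.take n) * sPath R G (σ.drop n) := by
    conv_lhs => rw [← List.take_append_drop n σ]
    rw [sPath_append]
  have hzero : ∀ b ∈ pathFinset G n, b ≠ σ.take n →
      sPath R G b * tPath R G b * mono R G σ A hA τ = 0 := by
    intro b hb hbne
    obtain ⟨hbl, _⟩ := mem_pathFinset.1 hb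
    have h0 : tPath R G b * sPath R G (σ.take n) = 0 :=
      tPath_mul_sPath_ne (by rw [hbl, hσ₁len]) hσ₁path hbne
    simp only [mono]
    rw [hsplit]
    simp only [mul_assoc]
    rw [← mul_assoc (tPath R G b), h0, zero_mul, mul_zero]
  rw [epsPos, Finset.sum_mul, Finset.sum_eq_single_of_mem _ hmem hzero]
  simp only [mono]
  rw [hsplit]
  simp only [mul_assoc]
  rw [← mul_assoc (tPath R G (σ.take n)), tPath_mul_sPath_self hσ₁path,
    ← mul_assoc, sPath_mul_pLast hσ₁ne]

lemma mono_mul_epsPos {n : ℕ} (hn : n ≠ 0) {σ τ : List E} {A : Set V} {hA : G.InG0 A}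
    (hτ : G.IsPath τ) (hlen : τ.length = σ.length + n) :
    mono R G σ A hA τ * epsPos R G n = mono R G σ A hA τ := by
  have hnle : n ≤ τ.length := by omega
  have hτ₁len : (τ.take n).length = n := by
    rw [List.length_take]; omega
  have hτ₁path : G.IsPath (τ.take n) := List.IsChain.take hτ n
  have hτ₁ne : τ.take n ≠ [] := by
    intro h; rw [h] at hτ₁len; simp at hτ₁len; omega
  have hmem : τ.take n ∈ pathFinset G n := mem_pathFinset.2 ⟨hτ₁len, hτ₁path⟩
  have hsplit : tPath R G τ = tPath R G (τ.drop n) * tPath R G (τ.take n) := by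
    conv_lhs => rw [← List.take_append_drop n τ]
    rw [tPath_append]
  have hzero : ∀ b ∈ pathFinset G n, b ≠ τ.take n →
      mono R G σ A hA τ * (sPath R G b * tPath R G b) = 0 := by
    intro b hb hbne
    obtain ⟨hbl, hbp⟩ := mem_pathFinset.1 hb
    have h0 : tPath R G (τ.take n) * sPath R G b = 0 :=
      tPath_mul_sPath_ne (by rw [hbl, hτ₁len]) hbp (fun h => hbne h.symm)
    simp only [mono]
    rw [hsplit]
    simp only [mul_assoc]
    rw [← mul_assoc (tPath R G (τ.take n)), h0, zero_mul, mul_zero, mul_zero, mul_zero]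
  rw [epsPos, Finset.mul_sum, Finset.sum_eq_single_of_mem _ hmem hzero]
  simp only [mono]
  rw [hsplit]
  simp only [mul_assoc]
  rw [← mul_assoc (tPath R G (τ.take n)), tPath_mul_sPath_self hτ₁path,
    pLast_mul_tPath hτ₁ne]

lemma epsPos_mem_mulSpan (n : ℕ) (hn : n ≠ 0) :
    epsPos R G n ∈ mulSpan (zComp R G (n : ℤ)) (zComp R G (-(n : ℤ))) := by
  refine AddSubgroup.sum_mem _ fun α hα => ?_
  obtain ⟨hlen, hpath⟩ := mem_pathFinset.1 hα
  obtain rfl | ⟨L, f, rfl⟩ := α.eq_nil_or_concat'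
  · exfalso; simp at hlen; omega
  · have hne : L ++ [f] ≠ [] := by simp
    have key : mono R G (L ++ [f]) (G.rng f) (InG0.range f) []
          * mono R G [] (G.rng f) (InG0.range f) (L ++ [f])
        = sPath R G (L ++ [f]) * tPath R G (L ++ [f]) := by
      simp only [mono, sPath_nil, tPath_nil, one_mul, mul_one, mul_assoc]
      rw [← mul_assoc (pgen R G (G.rng f) (InG0.range f)), pgen_inter,
        pgen_congr (Set.inter_self _) _ (InG0.range f),
        ← pLast_concat (R := R) (G := G) L f, pLast_mul_tPath hne]
    rw [← key]
    refine AddSubgroup.subset_closure ⟨_, ?_, _, ?_, rfl⟩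
    · exact mono_mem_zComp hpath (by simp [IsPath, List.Chain']) (by simp [hlen])
    · exact mono_mem_zComp (by simp [IsPath, List.Chain']) hpath (by simp [hlen])

end FiniteE

end Ultragraph

end EpsilonStrong

open Ultragraph in
/-- if `𝒢¹` is finite, `G⁰ ∈ 𝒢⁰` and the source of every edge lies in
the range of some edge, then `L_R(𝒢)` is epsilon-strongly `ℤ`-graded with respect to
the canonical grading. -/
theorem epsilonStrongZ_sufficient {V E : Type} [Countable V] [Countable E]
    (G : Ultragraph V E) (R : Type) [CommRing R] [Finite E]
    (hG0 : G.InG0 Set.univ)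
    (hsrc : ∀ e₁ : E, ∃ e₂ : E, G.src e₁ ∈ G.rng e₂) :
    ∃ eps : ℤ → LPABig R G, ∀ m : ℤ,
      eps m ∈ mulSpan (zComp R G m) (zComp R G (-m)) ∧
      ∀ t ∈ zComp R G m, eps m * t = t ∧ t * eps (-m) = t := by
  classical
  -- shared facts about `p_univ`
  have hpuL : ∀ t ∈ zComp R G (0 : ℤ), pgen R G Set.univ hG0 * t = t :=
    left_unit_of_mono (fun α β A hA hα hβ hd =>
      pgen_left_unit_mono hG0 (fun e => Set.mem_univ _) (fun e => Set.subset_univ _)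
        α β A hA (fun _ => Or.inr (Set.univ_inter A)))
  have hpuR : ∀ t ∈ zComp R G (0 : ℤ), t * pgen R G Set.univ hG0 = t :=
    right_unit_of_mono (fun α β A hA hα hβ hd =>
      pgen_right_unit_mono hG0 (fun e => Set.mem_univ _) (fun e => Set.subset_univ _)
        α β A hA (fun _ => Or.inr (Set.inter_univ A)))
  have hpuMem : pgen R G Set.univ hG0 ∈ mulSpan (zComp R G (0 : ℤ)) (zComp R G (0 : ℤ)) := by
    have key : mono R G [] Set.univ hG0 [] * mono R G [] Set.univ hG0 []
        = pgen R G Set.univ hG0 := by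
      rw [mono_nil_nil, pgen_inter, pgen_congr (Set.univ_inter _) _ hG0]
    refine AddSubgroup.subset_closure ⟨_, ?_, _, ?_, key.symm⟩
    · exact mono_mem_zComp (by simp [IsPath, List.Chain']) (by simp [IsPath, List.Chain']) (by simp)
    · exact mono_mem_zComp (by simp [IsPath, List.Chain']) (by simp [IsPath, List.Chain']) (by simp)
  cases isEmpty_or_nonempty E with
  | inl hE =>
    refine ⟨fun m => match m with
      | Int.ofNat 0 => pgen R G Set.univ hG0
      | _ => 0, fun m => ?_⟩
    cases m with
    | ofNat n =>
      cases n with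
      | zero =>
        exact ⟨hpuMem, fun t ht => ⟨hpuL t ht, hpuR t ht⟩⟩
      | succ n =>
        refine ⟨zero_mem _, fun t ht => ?_⟩
        have h0 : t = 0 := zComp_empty_eq_zero
          (by simp only [Int.ofNat_eq_natCast]; omega) ht
        rw [h0]
        exact ⟨mul_zero _, zero_mul _⟩
    | negSucc n =>
      refine ⟨zero_mem _, fun t ht => ?_⟩
      have h0 : t = 0 := zComp_empty_eq_zero
        (by simp only [Int.negSucc_eq]; omega) ht
      rw [h0]
      exact ⟨mul_zero _, zero_mul _⟩
  | inr hE =>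
    obtain ⟨estar⟩ := hE
    have instE : Fintype E := Fintype.ofFinite E
    have hmem_l : ∀ e : E, e ∈ (Finset.univ : Finset E).toList := fun e => by
      simp [Finset.mem_toList]
    have hW : G.InG0 (G.uniL (Finset.univ : Finset E).toList (G.rng estar)) :=
      uniL_inG0 (InG0.range estar) _
    have hsW : ∀ e : E, G.src e ∈ G.uniL (Finset.univ : Finset E).toList (G.rng estar) := by
      intro e
      obtain ⟨f, hf⟩ := hsrc e
      exact rng_subset_uniL (hmem_l f) _ hf
    have hrW : ∀ e : E, G.rng e ⊆ G.uniL (Finset.univ : Finset E).toList (G.rng estar) :=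
      fun e => rng_subset_uniL (hmem_l e) _
    refine ⟨fun m => match m with
      | Int.ofNat 0 => pgen R G Set.univ hG0
      | Int.ofNat (n+1) => epsPos R G (n+1)
      | Int.negSucc _ => pgen R G _ hW, fun m => ?_⟩
    cases m with
    | ofNat n =>
      cases n with
      | zero =>
        exact ⟨hpuMem, fun t ht => ⟨hpuL t ht, hpuR t ht⟩⟩
      | succ n =>
        refine ⟨epsPos_mem_mulSpan (n + 1) (Nat.succ_ne_zero n), fun t ht => ⟨?_, ?_⟩⟩
        · refine left_unit_of_mono (fun α β A hA hα hβ hd => ?_) t ht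
          refine epsPos_mul_mono (Nat.succ_ne_zero n) hα ?_
          rw [Int.ofNat_eq_natCast] at hd
          omega
        · refine right_unit_of_mono (fun α β A hA hα hβ hd => ?_) t ht
          refine pgen_right_unit_mono hW hsW hrW α β A hA (fun hβnil => Or.inl ?_)
          intro hαnil
          rw [hαnil, hβnil, Int.ofNat_eq_natCast] at hd
          simp only [List.length_nil, Nat.cast_zero] at hd
          omega
    | negSucc n =>
      refine ⟨?_, fun t ht => ⟨?_, ?_⟩⟩
      · exact pgen_uniL_mem_mulSpan hsrc (Nat.succ_ne_zero n) _ (InG0.range estar)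
          subset_rfl hW
      · refine left_unit_of_mono (fun α β A hA hα hβ hd => ?_) t ht
        refine pgen_left_unit_mono hW hsW hrW α β A hA (fun hαnil => Or.inl ?_)
        intro hβnil
        rw [hαnil, hβnil, Int.negSucc_eq] at hd
        simp only [List.length_nil, Nat.cast_zero] at hd
        omega
      · refine right_unit_of_mono (fun α β A hA hα hβ hd => ?_) t ht
        refine mono_mul_epsPos (Nat.succ_ne_zero n) hβ ?_
        rw [Int.negSucc_eq] at hd
        omega
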